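/- arXiv:2009.04408 — 5 statements merged into one kernel-verified Lean document; each statement's English description precedes it below -/
import Mathlib

section
/- If ξ and η are essentially bounded random variables with ξ ≤ 0, η ≥ 0, and {ξ < 0} ∩ {η > 0} = ∅ almost surely, then ξ and η are comonotonic, i.e., there exist a random variable ζ and nondecreasing functions f, g : ℝ → ℝ with ξ = f(ζ) and η = g(ζ) almost surely. -/
open MeasureTheory

/-- If ξ ≤ 0 a.s., η ≥ 0 a.s., and a.s. not (ξ < 0 and η > 0),
then ξ and η are comonotonic (a.s. nondecreasing functions of a common random variable). -/
theorem stmt_0 {Ω : Type*} [MeasurableSpace Ω] (μ : Measure Ω) [IsProbabilityMeasure μ]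
    (ξ η : Ω → ℝ) (hξm : Measurable ξ) (hηm : Measurable η)
    (hξb : ∃ C : ℝ, ∀ᵐ ω ∂μ, |ξ ω| ≤ C) (hηb : ∃ C : ℝ, ∀ᵐ ω ∂μ, |η ω| ≤ C)
    (hξ0 : ∀ᵐ ω ∂μ, ξ ω ≤ 0) (hη0 : ∀ᵐ ω ∂μ, 0 ≤ η ω)
    (hdisj : ∀ᵐ ω ∂μ, ¬(ξ ω < 0 ∧ 0 < η ω)) :
    ∃ (ζ : Ω → ℝ) (f g : ℝ → ℝ), Monotone f ∧ Monotone g ∧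
      (∀ᵐ ω ∂μ, ξ ω = f (ζ ω)) ∧ (∀ᵐ ω ∂μ, η ω = g (ζ ω)) := by
  refine ⟨fun ω => ξ ω + η ω, fun x => min x 0, fun x => max x 0,
    fun a b h => min_le_min h le_rfl, fun a b h => max_le_max h le_rfl, ?_, ?_⟩ <;>
  · filter_upwards [hξ0, hη0, hdisj] with ω h1 h2 h3
    rcases eq_or_lt_of_le h1 with he | hl
    · simp [he, min_eq_right h2, max_eq_left h2]
    · have hη : η ω = 0 := le_antisymm (not_lt.1 fun hp => h3 ⟨hl, hp⟩) h2
      simp [hη, min_eq_left h1, max_eq_right h1]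
end

section
/- Every comonotonic convex monetary valuation function on L^∞ is positively homogeneous (hence coherent). That is, if P : L^∞ → ℝ is convex, monotone-compatible (P(ξ) ≥ 0 for ξ ≥ 0), translation invariant (P(ξ + a) = P(ξ) + a for a ∈ ℝ), continuous from below, and additive on comonotonic pairs, then P(λξ) = λP(ξ) for all λ ≥ 0 and ξ ∈ L^∞. -/
open MeasureTheory

/-- Two random variables are comonotonic if both are nondecreasing functions
of a common random variable. -/
def Comonotone {Ω : Type*} (ξ η : Ω → ℝ) : Prop :=
  ∃ (ζ : Ω → ℝ) (f g : ℝ → ℝ), Monotone f ∧ Monotone g ∧ ξ = f ∘ ζ ∧ η = g ∘ ζ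

/-- Every comonotonic convex monetary valuation function on L^∞
is positively homogeneous. -/
theorem stmt_1 {Ω : Type*} (P : (Ω → ℝ) → ℝ)
    (hpos : ∀ ξ : Ω → ℝ, (∀ ω, 0 ≤ ξ ω) → 0 ≤ P ξ)
    (hconv : ∀ (ξ η : Ω → ℝ) (t : ℝ), 0 ≤ t → t ≤ 1 →
      P (fun ω => t * ξ ω + (1 - t) * η ω) ≤ t * P ξ + (1 - t) * P η)
    (htrans : ∀ (ξ : Ω → ℝ) (a : ℝ), P (fun ω => ξ ω + a) = P ξ + a)
    (hcont : ∀ (ξn : ℕ → Ω → ℝ) (ξ : Ω → ℝ),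
      (∀ n ω, ξn n ω ≤ ξn (n + 1) ω) →
      (∀ ω, Filter.Tendsto (fun n => ξn n ω) Filter.atTop (nhds (ξ ω))) →
      Filter.Tendsto (fun n => P (ξn n)) Filter.atTop (nhds (P ξ)))
    (hcom : ∀ ξ η : Ω → ℝ, Comonotone ξ η → P (ξ + η) = P ξ + P η) :
    ∀ c : ℝ, 0 ≤ c → ∀ ξ : Ω → ℝ, P (fun ω => c * ξ ω) = c * P ξ := by
  intro c hc ξ
  set g : ℝ → ℝ := fun t => P (fun ω => t * ξ ω) with hg
  -- additivity of g on nonneg reals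
  have hadd : ∀ s t : ℝ, 0 ≤ s → 0 ≤ t → g (s + t) = g s + g t := by
    intro s t hs ht
    have hcm : Comonotone (fun ω => s * ξ ω) (fun ω => t * ξ ω) :=
      ⟨ξ, fun x => s * x, fun x => t * x,
        fun a b hab => mul_le_mul_of_nonneg_left hab hs,
        fun a b hab => mul_le_mul_of_nonneg_left hab ht, rfl, rfl⟩
    have := hcom _ _ hcm
    have heq : ((fun ω => s * ξ ω) + fun ω => t * ξ ω) = fun ω => (s + t) * ξ ω := by
      funext ω; simp [add_mul]
    rw [heq] at this
    exact this
  have hg0 : g 0 = 0 := by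
    have := hadd 0 0 le_rfl le_rfl
    simp at this; linarith
  -- natural multiples
  have hnat : ∀ (n : ℕ) (t : ℝ), 0 ≤ t → g (n * t) = n * g t := by
    intro n
    induction n with
    | zero => intro t ht; simpa using hg0
    | succ n ih =>
      intro t ht
      have : ((n : ℝ) + 1) * t = (n : ℝ) * t + t := by ring
      rw [Nat.cast_succ, this, hadd _ _ (by positivity) ht, ih t ht]
      ring
  -- rational homogeneity
  have hrat : ∀ q : ℚ, 0 ≤ q → g q = q * g 1 := by
    intro q hq
    have hden : (q.den : ℝ) ≠ 0 := by exact_mod_cast q.den_nz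
    have hqnn : (0:ℝ) ≤ (q:ℝ) := by exact_mod_cast hq
    have h1 : g ((q.den : ℝ) * (q:ℝ)) = (q.den : ℝ) * g q := hnat q.den q hqnn
    have h2 : (q.den : ℝ) * (q:ℝ) = ((q.num.toNat : ℕ) : ℝ) := by
      have ha : ((q * (q.den:ℚ) : ℚ) : ℝ) = ((q.num : ℤ) : ℝ) := by
        exact_mod_cast congrArg (fun x : ℚ => (x : ℝ)) (Rat.mul_den_eq_num q)
      have hb : ((q.num : ℤ) : ℝ) = ((q.num.toNat : ℕ) : ℝ) := by
        exact_mod_cast congrArg (fun x : ℤ => (x : ℝ))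
          (Int.toNat_of_nonneg (Rat.num_nonneg.mpr hq)).symm
      push_cast at ha
      rw [mul_comm]; rw [ha] at *; exact hb
    have h3 : g (((q.num.toNat : ℕ) : ℝ) * (1:ℝ)) = ((q.num.toNat : ℕ) : ℝ) * g 1 :=
      hnat q.num.toNat 1 zero_le_one
    rw [mul_one] at h3
    rw [h2, h3] at h1
    -- h1 : (q.num.toNat : ℝ) * g 1 = q.den * g q ; and q.num.toNat = q.den * q
    rw [← h2] at h1
    have := mul_left_cancel₀ hden (h1.symm.trans (by ring : (q.den:ℝ) * (q:ℝ) * g 1 = (q.den:ℝ) * ((q:ℝ) * g 1)))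
    exact this
  -- convexity of g
  have hgconv : ConvexOn ℝ Set.univ g := by
    constructor
    · exact convex_univ
    · intro x _ y _ a b ha hb hab
      have hb1 : b = 1 - a := by linarith
      have := hconv (fun ω => x * ξ ω) (fun ω => y * ξ ω) a ha (by linarith)
      have heq : (fun ω => a * (x * ξ ω) + (1 - a) * (y * ξ ω))
          = fun ω => (a * x + (1 - a) * y) * ξ ω := by
        funext ω; ring
      rw [heq] at this
      simpa [hg, hb1, smul_eq_mul] using this
  have hgcont : Continuous g := by
    have := hgconv.continuousOn isOpen_univ
    rw [← continuousOn_univ]; exact this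
  -- approximate c from above by rationals
  by_cases hc0 : c = 0
  · subst hc0
    rw [show (0:ℝ) * P ξ = 0 by ring]
    exact hg0
  have hcpos : 0 < c := lt_of_le_of_ne hc (Ne.symm hc0)
  have hseq : ∀ n : ℕ, ∃ q : ℚ, c < q ∧ (q:ℝ) < c + 1/(n+1) := by
    intro n
    refine exists_rat_btwn ?_
    have : (0:ℝ) < 1/((n:ℝ)+1) := by positivity
    linarith
  choose q hq1 hq2 using hseq
  have htend : Filter.Tendsto (fun n => ((q n : ℝ))) Filter.atTop (nhds c) := by
    have h1 : Filter.Tendsto (fun n : ℕ => c + 1/((n:ℝ)+1)) Filter.atTop (nhds c) := by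
      have := tendsto_one_div_add_atTop_nhds_zero_nat (𝕜 := ℝ)
      simpa using (tendsto_const_nhds (x := c)).add this
    exact tendsto_of_tendsto_of_tendsto_of_le_of_le
      (tendsto_const_nhds) h1 (fun n => (hq1 n).le) (fun n => (hq2 n).le)
  have hgq : ∀ n, g (q n) = (q n : ℝ) * g 1 := by
    intro n
    exact hrat (q n) (by exact_mod_cast (hcpos.trans (hq1 n)).le)
  have hlim1 : Filter.Tendsto (fun n => g (q n)) Filter.atTop (nhds (g c)) :=
    (hgcont.tendsto c).comp htend
  have hlim2 : Filter.Tendsto (fun n => (q n : ℝ) * g 1) Filter.atTop (nhds (c * g 1)) :=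
    htend.mul tendsto_const_nhds
  have : g c = c * g 1 := by
    apply tendsto_nhds_unique hlim1
    simpa only [hgq] using hlim2
  have hg1 : g 1 = P ξ := by simp [hg]
  rw [hg1] at this
  exact this
end

section
/- Let P be a coherent comonotonic valuation function with representation P(ξ) = sup_{Q ∈ S} E_Q[ξ] over a weakly compact scenario set S ⊂ L^1 of probability measures. For ξ ∈ L^∞ and m ∈ ℝ, any Q* ∈ S attaining P(ξ) = E_{Q*}[ξ] also attains the suprema for (ξ − m)^+, for −(ξ − m)^−, and for ξ ∧ m; i.e., ∇P(ξ) ⊆ ∇P((ξ−m)^+), ∇P(ξ) ⊆ ∇P(−(ξ−m)^−), and ∇P(ξ) ⊆ ∇P(ξ ∧ m). -/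
open MeasureTheory

/-- For a coherent comonotonic valuation P represented over a scenario
set S, any Q* ∈ ∇P(ξ) also lies in ∇P((ξ−m)⁺), ∇P(−(ξ−m)⁻) and ∇P(ξ ∧ m). -/
theorem stmt_2 {Ω : Type*} [MeasurableSpace Ω] (μ : Measure Ω) [IsProbabilityMeasure μ]
    (P : (Ω → ℝ) → ℝ) (S : Set (Measure Ω))
    (hSprob : ∀ Q ∈ S, IsProbabilityMeasure Q)
    (hSac : ∀ Q ∈ S, Q ≪ μ)
    -- P dominates the expectation under every scenario measure …
    (hdom : ∀ ζ : Ω → ℝ, Measurable ζ → (∃ C : ℝ, ∀ ω, |ζ ω| ≤ C) →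
      ∀ Q ∈ S, ∫ ω, ζ ω ∂Q ≤ P ζ)
    -- … and is attained on S (weak compactness)
    (hattain : ∀ ζ : Ω → ℝ, Measurable ζ → (∃ C : ℝ, ∀ ω, |ζ ω| ≤ C) →
      ∃ Q ∈ S, ∫ ω, ζ ω ∂Q = P ζ)
    (hcom : ∀ ξ η : Ω → ℝ, Comonotone ξ η → P (ξ + η) = P ξ + P η)
    (htrans : ∀ (ξ : Ω → ℝ) (a : ℝ), P (fun ω => ξ ω + a) = P ξ + a)
    (hhom : ∀ (c : ℝ), 0 ≤ c → ∀ ξ : Ω → ℝ, P (fun ω => c * ξ ω) = c * P ξ)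
    (ξ : Ω → ℝ) (hξm : Measurable ξ) (hξb : ∃ C : ℝ, ∀ ω, |ξ ω| ≤ C) (m : ℝ)
    (Q : Measure Ω) (hQS : Q ∈ S) (hQξ : ∫ ω, ξ ω ∂Q = P ξ) :
    (∫ ω, max (ξ ω - m) 0 ∂Q = P (fun ω => max (ξ ω - m) 0)) ∧
    (∫ ω, -max (m - ξ ω) 0 ∂Q = P (fun ω => -max (m - ξ ω) 0)) ∧
    (∫ ω, min (ξ ω) m ∂Q = P (fun ω => min (ξ ω) m)) := by
  obtain ⟨C0, hC0⟩ := hξb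
  set C := |C0| with hCdef
  have hC : ∀ ω, |ξ ω| ≤ C := fun ω => (hC0 ω).trans (le_abs_self C0)
  have hQprob : IsProbabilityMeasure Q := hSprob Q hQS
  set f1 : Ω → ℝ := fun ω => max (ξ ω - m) 0 with hf1
  set f2 : Ω → ℝ := fun ω => -max (m - ξ ω) 0 with hf2
  set f3 : Ω → ℝ := fun ω => min (ξ ω) m with hf3
  have hm1 : Measurable f1 := (hξm.sub measurable_const).max measurable_const
  have hm2 : Measurable f2 := ((measurable_const.sub hξm).max measurable_const).neg
  have hm3 : Measurable f3 := hξm.min measurable_const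
  have hCnn : 0 ≤ C + |m| := by positivity
  have hb1 : ∀ ω, |f1 ω| ≤ C + |m| := by
    intro ω
    have h1 := abs_le.mp (hC ω)
    have h2 : -|m| ≤ m := neg_abs_le m
    rw [hf1, abs_of_nonneg (le_max_right _ _)]
    exact max_le (by linarith) hCnn
  have hb2 : ∀ ω, |f2 ω| ≤ C + |m| := by
    intro ω
    have h1 := abs_le.mp (hC ω)
    have h2 : m ≤ |m| := le_abs_self m
    rw [hf2, abs_neg, abs_of_nonneg (le_max_right _ _)]
    exact max_le (by linarith) hCnn
  have hb3 : ∀ ω, |f3 ω| ≤ C + |m| := by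
    intro ω
    have h1 := abs_le.mp (hC ω)
    have h2 : -|m| ≤ m := neg_abs_le m
    have h3 : m ≤ |m| := le_abs_self m
    rw [abs_le]
    constructor
    · simp only [hf3, le_min_iff]; constructor <;> linarith
    · calc min (ξ ω) m ≤ ξ ω := min_le_left _ _
        _ ≤ C := h1.2
        _ ≤ C + |m| := by linarith [abs_nonneg m]
  have hint : ∀ g : Ω → ℝ, Measurable g → (∀ ω, |g ω| ≤ C + |m|) → Integrable g Q := by
    intro g hg hb
    exact (integrable_const (C + |m|)).mono' hg.aestronglyMeasurable
      (Filter.Eventually.of_forall fun ω => by simpa using hb ω)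
  have hi1 := hint f1 hm1 hb1
  have hi2 := hint f2 hm2 hb2
  have hi3 := hint f3 hm3 hb3
  -- pointwise identities
  have hid12 : ∀ ω, f1 ω + f2 ω = ξ ω - m := by
    intro ω; simp only [hf1, hf2]
    rcases le_total (ξ ω) m with h | h
    · rw [max_eq_right (by linarith), max_eq_left (by linarith)]; ring
    · rw [max_eq_left (by linarith), max_eq_right (by linarith)]; ring
  have hid31 : ∀ ω, f3 ω + f1 ω = ξ ω := by
    intro ω; simp only [hf1, hf3]
    rcases le_total (ξ ω) m with h | h
    · rw [min_eq_left h, max_eq_right (by linarith)]; ring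
    · rw [min_eq_right h, max_eq_left (by linarith)]; ring
  -- comonotonicity
  have hmonof1 : Monotone (fun x : ℝ => max (x - m) 0) := by
    intro a b hab; exact max_le_max (by linarith) le_rfl
  have hmonof2 : Monotone (fun x : ℝ => -max (m - x) 0) := by
    intro a b hab
    simp only [neg_le_neg_iff]
    exact max_le_max (by linarith) le_rfl
  have hmonof3 : Monotone (fun x : ℝ => min x m) := by
    intro a b hab; exact min_le_min hab le_rfl
  have hP12 : P (f1 + f2) = P f1 + P f2 :=
    hcom f1 f2 ⟨ξ, _, _, hmonof1, hmonof2, rfl, rfl⟩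
  have hP31 : P (f3 + f1) = P f3 + P f1 :=
    hcom f3 f1 ⟨ξ, _, _, hmonof3, hmonof1, rfl, rfl⟩
  have hPsum12 : P f1 + P f2 = P ξ - m := by
    rw [← hP12]
    have : (f1 + f2) = fun ω => ξ ω + (-m) := by
      funext ω; simp [hid12 ω]; ring
    rw [this, htrans]; ring
  have hPsum31 : P f3 + P f1 = P ξ := by
    rw [← hP31]
    have : (f3 + f1) = ξ := by funext ω; exact hid31 ω
    rw [this]
  -- integral identities
  have hIsum12 : (∫ ω, f1 ω ∂Q) + (∫ ω, f2 ω ∂Q) = P ξ - m := by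
    rw [← integral_add hi1 hi2]
    have : ∫ ω, (f1 ω + f2 ω) ∂Q = ∫ ω, (ξ ω - m) ∂Q := by
      congr 1; funext ω; exact hid12 ω
    rw [this, integral_sub (hint ξ hξm (fun ω => (hC ω).trans (by linarith [abs_nonneg m])))
      (integrable_const m), hQξ]
    simp
  have hIsum31 : (∫ ω, f3 ω ∂Q) + (∫ ω, f1 ω ∂Q) = P ξ := by
    rw [← integral_add hi3 hi1]
    have : ∫ ω, (f3 ω + f1 ω) ∂Q = ∫ ω, ξ ω ∂Q := by
      congr 1; funext ω; exact hid31 ω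
    rw [this, hQξ]
  have hd1 : (∫ ω, f1 ω ∂Q) ≤ P f1 := hdom f1 hm1 ⟨C + |m|, hb1⟩ Q hQS
  have hd2 : (∫ ω, f2 ω ∂Q) ≤ P f2 := hdom f2 hm2 ⟨C + |m|, hb2⟩ Q hQS
  have hd3 : (∫ ω, f3 ω ∂Q) ≤ P f3 := hdom f3 hm3 ⟨C + |m|, hb3⟩ Q hQS
  refine ⟨by linarith, by linarith, by linarith⟩
end

section
/- Fix Q* ∈ ∇P(Z), set π*(A) = E_{Q*}[Z·1_A], and define state payoffs Y*(A) = α*(A)(K−Z)^+ + (Z∧K)·1_A with α*(A) = E_{Q*}[(Z−K)^+ 1_A]/P((Z−K)^+). Then Y* is fair given π*: for all A ∈ F, P(Z·1_A − Y*(A)) + π*(A) ≤ P(Z·1_A). -/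
open MeasureTheory

private lemma integrable_of_bdd {Ω : Type*} [MeasurableSpace Ω] (Q : Measure Ω)
    [IsProbabilityMeasure Q] {f : Ω → ℝ} (hm : Measurable f) {C : ℝ}
    (hb : ∀ ω, |f ω| ≤ C) : Integrable f Q :=
  (integrable_const C).mono' hm.aestronglyMeasurable
    (Filter.Eventually.of_forall (fun ω => by simpa [Real.norm_eq_abs] using hb ω))

/-- With Q* ∈ ∇P(Z), π*(A) = E_{Q*}[Z·1_A] and
Y*(A) = α*(A)(K−Z)⁺ + (Z∧K)·1_A, where α*(A) = E_{Q*}[(Z−K)⁺1_A]/P((Z−K)⁺),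
the family Y* is fair given π*: P(Z·1_A − Y*(A)) + π*(A) ≤ P(Z·1_A) for all A. -/
theorem stmt_10 {Ω : Type*} [MeasurableSpace Ω] (μ : Measure Ω) [IsProbabilityMeasure μ]
    (P : (Ω → ℝ) → ℝ) (S : Set (Measure Ω))
    (hSprob : ∀ Q ∈ S, IsProbabilityMeasure Q)
    (hSac : ∀ Q ∈ S, Q ≪ μ)
    (hdom : ∀ ζ : Ω → ℝ, Measurable ζ → (∃ C : ℝ, ∀ ω, |ζ ω| ≤ C) →
      ∀ Q ∈ S, ∫ ω, ζ ω ∂Q ≤ P ζ)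
    (hcom : ∀ ξ η : Ω → ℝ,
      (∃ (ζ : Ω → ℝ) (f g : ℝ → ℝ), Monotone f ∧ Monotone g ∧ ξ = f ∘ ζ ∧ η = g ∘ ζ) →
      P (ξ + η) = P ξ + P η)
    (hhom : ∀ (c : ℝ), 0 ≤ c → ∀ ξ : Ω → ℝ, P (fun ω => c * ξ ω) = c * P ξ)
    (Z : Ω → ℝ) (hZm : Measurable Z) (hZ0 : ∀ ω, 0 ≤ Z ω) (hZb : ∃ C : ℝ, ∀ ω, Z ω ≤ C)
    (K : ℝ) (hK : K = P Z)
    (hPpos : 0 < P (fun ω => max (Z ω - K) 0))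
    (Qstar : Measure Ω) (hQS : Qstar ∈ S) (hQZ : ∫ ω, Z ω ∂Qstar = P Z)
    (πs : Set Ω → ℝ) (hπ : ∀ A, πs A = ∫ ω in A, Z ω ∂Qstar)
    (αs : Set Ω → ℝ)
    (hα : ∀ A, αs A = (∫ ω in A, max (Z ω - K) 0 ∂Qstar) / P (fun ω => max (Z ω - K) 0))
    (Ys : Set Ω → Ω → ℝ)
    (hYs : ∀ A ω, Ys A ω = αs A * max (K - Z ω) 0 +
      min (Z ω) K * Set.indicator A (fun _ => (1 : ℝ)) ω) :
    ∀ A : Set Ω, MeasurableSet A →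
      P (fun ω => Set.indicator A Z ω - Ys A ω) + πs A ≤ P (Set.indicator A Z) := by
  obtain ⟨C, hC⟩ := hZb
  intro A hA
  haveI hQprob : IsProbabilityMeasure Qstar := hSprob _ hQS
  set g : Ω → ℝ := fun ω => max (Z ω - K) 0 with hg
  set h : Ω → ℝ := fun ω => max (K - Z ω) 0 with hh
  set m : Ω → ℝ := fun ω => min (Z ω) K with hm
  set nh : Ω → ℝ := fun ω => min (Z ω - K) 0 with hnh
  have hK0 : 0 ≤ K := by
    rw [hK, ← hQZ]; exact integral_nonneg hZ0
  -- pointwise facts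
  have hg0 : ∀ ω, 0 ≤ g ω := fun ω => le_max_right _ _
  have hh0 : ∀ ω, 0 ≤ h ω := fun ω => le_max_right _ _
  have hmono1 : Monotone (fun t : ℝ => max (t - K) 0) :=
    fun a b hab => max_le_max (by linarith) le_rfl
  have hmono2 : Monotone (fun t : ℝ => min t K) :=
    fun a b hab => min_le_min hab le_rfl
  have hmono3 : Monotone (fun t : ℝ => min (t - K) 0) :=
    fun a b hab => min_le_min (by linarith) le_rfl
  have hsum_gm : ∀ ω, g ω + m ω = Z ω := by
    intro ω
    rcases le_total (Z ω) K with h1 | h1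
    · simp only [hg, hm]
      rw [max_eq_right (by linarith), min_eq_left h1]; ring
    · simp only [hg, hm]
      rw [max_eq_left (by linarith), min_eq_right h1]; ring
  have hgh : ∀ ω, g ω - h ω = Z ω - K := by
    intro ω
    rcases le_total (Z ω) K with h1 | h1
    · simp only [hg, hh]
      rw [max_eq_right (by linarith), max_eq_left (by linarith)]; ring
    · simp only [hg, hh]
      rw [max_eq_left (by linarith), max_eq_right (by linarith)]; ring
  have hmKh : ∀ ω, m ω = K - h ω := by
    intro ω
    rcases le_total (Z ω) K with h1 | h1
    · simp only [hm, hh]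
      rw [min_eq_left h1, max_eq_left (by linarith)]; ring
    · simp only [hm, hh]
      rw [min_eq_right h1, max_eq_right (by linarith)]; ring
  have hnhh : ∀ ω, nh ω = - h ω := by
    intro ω
    rcases le_total (Z ω) K with h1 | h1
    · simp only [hnh, hh]
      rw [min_eq_left (by linarith), max_eq_left (by linarith)]; ring
    · simp only [hnh, hh]
      rw [min_eq_right (by linarith), max_eq_right (by linarith)]; ring
  -- measurability and bounds
  have hgm' : Measurable g := (hZm.sub measurable_const).max measurable_const
  have hhm' : Measurable h := (measurable_const.sub hZm).max measurable_const
  have hmm' : Measurable m := hZm.min measurable_const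
  have habsZ : ∀ ω, |Z ω| ≤ C := fun ω => abs_le.2 ⟨by linarith [hZ0 ω, hC ω], hC ω⟩
  have hgb : ∀ ω, |g ω| ≤ C + |K| := by
    intro ω
    rw [abs_of_nonneg (hg0 ω)]
    rcases le_total (Z ω) K with h1 | h1
    · simp only [hg]
      rw [max_eq_right (by linarith)]
      have := abs_nonneg K; have := hZ0 ω
      have hCnn : 0 ≤ C := le_trans (hZ0 ω) (hC ω)
      linarith
    · simp only [hg]
      rw [max_eq_left (by linarith)]
      have := le_abs_self K; have := neg_abs_le K
      linarith [hC ω]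
  have hhb : ∀ ω, |h ω| ≤ |K| := by
    intro ω
    rw [abs_of_nonneg (hh0 ω)]
    rcases le_total (Z ω) K with h1 | h1
    · simp only [hh]
      rw [max_eq_left (by linarith)]
      have := le_abs_self K; linarith [hZ0 ω]
    · simp only [hh]
      rw [max_eq_right (by linarith)]
      exact abs_nonneg K
  have hmb : ∀ ω, |m ω| ≤ C + |K| := by
    intro ω
    have := hsum_gm ω
    have := hgb ω; have := habsZ ω
    have hCnn : 0 ≤ C := le_trans (hZ0 ω) (hC ω)
    rcases le_total (Z ω) K with h1 | h1
    · simp only [hm]; rw [min_eq_left h1]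
      rw [abs_le] at *; constructor <;> linarith [habsZ ω, abs_nonneg K]
    · simp only [hm]; rw [min_eq_right h1]
      rw [abs_le]; constructor
      · linarith [neg_abs_le K, hCnn]
      · linarith [le_abs_self K, hCnn]
  have intZ : Integrable Z Qstar := integrable_of_bdd Qstar hZm habsZ
  have intg : Integrable g Qstar := integrable_of_bdd Qstar hgm' hgb
  have inth : Integrable h Qstar := integrable_of_bdd Qstar hhm' hhb
  have intm : Integrable m Qstar := integrable_of_bdd Qstar hmm' hmb
  -- P Z = P g + P m
  have hPZsplit : P Z = P g + P m := by
    have hc := hcom g m ⟨Z, fun t => max (t - K) 0, fun t => min t K,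
      hmono1, hmono2, rfl, rfl⟩
    have : g + m = Z := funext fun ω => hsum_gm ω
    rw [this] at hc
    exact hc
  -- E[g] = P g, E[m] = P m
  have hEgm : ∫ ω, g ω ∂Qstar + ∫ ω, m ω ∂Qstar = P Z := by
    rw [← integral_add intg intm]
    simp only [hsum_gm]
    exact hQZ
  have hEg_le : ∫ ω, g ω ∂Qstar ≤ P g := hdom g hgm' ⟨C + |K|, hgb⟩ Qstar hQS
  have hEm_le : ∫ ω, m ω ∂Qstar ≤ P m := hdom m hmm' ⟨C + |K|, hmb⟩ Qstar hQS
  have hEg : ∫ ω, g ω ∂Qstar = P g := by linarith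
  have hEm : ∫ ω, m ω ∂Qstar = P m := by linarith
  -- E[h] = E[g] = P g
  have hEh : ∫ ω, h ω ∂Qstar = P g := by
    have h1 : ∫ ω, g ω ∂Qstar - ∫ ω, h ω ∂Qstar = ∫ ω, (g ω - h ω) ∂Qstar :=
      (integral_sub intg inth).symm
    have h2 : ∫ ω, (g ω - h ω) ∂Qstar = ∫ ω, Z ω ∂Qstar - K := by
      simp only [hgh]
      rw [integral_sub intZ (integrable_const K)]
      simp
    rw [h2] at h1
    rw [hQZ, ← hK] at h1
    linarith
  -- α ≥ 0 and α * E[h] = ∫_A g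
  have ha0 : 0 ≤ αs A := by
    rw [hα]
    exact div_nonneg (setIntegral_nonneg hA fun ω _ => hg0 ω) (le_of_lt hPpos)
  have haE : αs A * ∫ ω, h ω ∂Qstar = ∫ ω in A, g ω ∂Qstar := by
    rw [hα, hEh]
    exact div_mul_cancel₀ _ (ne_of_gt hPpos)
  -- P m = P (const K) + P nh, and P (const K) ≥ K
  have hPmsplit : P m = P (fun _ => K) + P nh := by
    have hc := hcom (fun _ => K) nh ⟨Z, fun _ => K, fun t => min (t - K) 0,
      monotone_const, hmono3, rfl, rfl⟩
    have : (fun _ : Ω => K) + nh = m := by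
      funext ω
      have := hmKh ω; have := hnhh ω
      simp only [Pi.add_apply]
      linarith
    rw [this] at hc
    exact hc
  have hPK : K ≤ P (fun _ => K) := by
    have := hdom (fun _ => K) measurable_const ⟨|K|, fun ω => le_of_eq rfl⟩ Qstar hQS
    simpa using this
  have hPnh : P nh ≤ - ∫ ω, h ω ∂Qstar := by
    have hEmh : ∫ ω, m ω ∂Qstar = K - ∫ ω, h ω ∂Qstar := by
      simp only [hmKh]
      rw [integral_sub (integrable_const K) inth]
      simp
    have := hEm
    linarith
  -- split P F where F = indicator A Z - Ys A
  have hFval : ∀ ω, Set.indicator A Z ω - Ys A ω = Set.indicator A g ω - αs A * h ω := by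
    intro ω
    rw [hYs]
    by_cases hω : ω ∈ A
    · simp only [Set.indicator_of_mem hω]
      have := hsum_gm ω
      linarith
    · simp only [Set.indicator_of_notMem hω]
      ring
  have hFmax : ∀ ω, max (Set.indicator A Z ω - Ys A ω) 0 = Set.indicator A g ω := by
    intro ω
    rw [hFval]
    by_cases hω : ω ∈ A
    · simp only [Set.indicator_of_mem hω]
      rcases le_total (Z ω) K with h1 | h1
      · have hgz : g ω = 0 := by simp only [hg]; rw [max_eq_right (by linarith)]
        rw [hgz]
        rw [max_eq_right (by nlinarith [mul_nonneg ha0 (hh0 ω)])]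
      · have hhz : h ω = 0 := by simp only [hh]; rw [max_eq_right (by linarith)]
        rw [hhz]
        rw [max_eq_left (by simpa using hg0 ω)]
        ring
    · simp only [Set.indicator_of_notMem hω]
      rw [max_eq_right (by nlinarith [mul_nonneg ha0 (hh0 ω)])]
  have hFmin : ∀ ω, min (Set.indicator A Z ω - Ys A ω) 0 = αs A * nh ω := by
    intro ω
    rw [hFval, hnhh ω]
    rcases le_total (Z ω) K with h1 | h1
    · have hgz : g ω = 0 := by simp only [hg]; rw [max_eq_right (by linarith)]
      have hindz : Set.indicator A g ω = 0 := by
        by_cases hω : ω ∈ A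
        · rw [Set.indicator_of_mem hω, hgz]
        · rw [Set.indicator_of_notMem hω]
      rw [hindz]
      rw [min_eq_left (by nlinarith [mul_nonneg ha0 (hh0 ω)])]
      ring
    · have hhz : h ω = 0 := by simp only [hh]; rw [max_eq_right (by linarith)]
      rw [hhz]
      have hind0 : 0 ≤ Set.indicator A g ω := Set.indicator_nonneg (fun ω _ => hg0 ω) ω
      rw [min_eq_right (by linarith)]
      ring
  have hPFsplit : P (fun ω => Set.indicator A Z ω - Ys A ω) =
      P (Set.indicator A g) + αs A * P nh := by
    set F : Ω → ℝ := fun ω => Set.indicator A Z ω - Ys A ω with hF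
    have hc := hcom (fun ω => max (F ω) 0) (fun ω => min (F ω) 0)
      ⟨F, fun t => max t 0, fun t => min t 0,
        fun a b hab => max_le_max hab le_rfl, fun a b hab => min_le_min hab le_rfl, rfl, rfl⟩
    have he1 : (fun ω => max (F ω) 0) + (fun ω => min (F ω) 0) = F := by
      funext ω
      simp only [Pi.add_apply]
      rw [max_add_min]
      ring
    rw [he1] at hc
    have he2 : (fun ω => max (F ω) 0) = Set.indicator A g := funext fun ω => hFmax ω
    have he3 : (fun ω => min (F ω) 0) = fun ω => αs A * nh ω := funext fun ω => hFmin ω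
    rw [he2, he3] at hc
    rw [hc, hhom (αs A) ha0 nh]
  -- indicator split
  have hPindsplit : P (Set.indicator A Z) = P (Set.indicator A g) + P (Set.indicator A m) := by
    have hc := hcom (Set.indicator A g) (Set.indicator A m)
      ⟨Set.indicator A Z, fun t => max (t - K) 0, fun t => min t K,
        hmono1, hmono2, ?_, ?_⟩
    · have : Set.indicator A g + Set.indicator A m = Set.indicator A Z := by
        funext ω
        simp only [Pi.add_apply]
        by_cases hω : ω ∈ A
        · simp only [Set.indicator_of_mem hω]; exact hsum_gm ω
        · simp only [Set.indicator_of_notMem hω]; ring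
      rw [this] at hc
      exact hc
    · funext ω
      by_cases hω : ω ∈ A
      · simp only [Function.comp_apply, Set.indicator_of_mem hω, hg]
      · simp only [Function.comp_apply, Set.indicator_of_notMem hω]
        rw [max_eq_right (by linarith)]
    · funext ω
      by_cases hω : ω ∈ A
      · simp only [Function.comp_apply, Set.indicator_of_mem hω, hm]
      · simp only [Function.comp_apply, Set.indicator_of_notMem hω]
        rw [min_eq_left (by linarith)]
  -- π split
  have hπA : πs A = (∫ ω in A, g ω ∂Qstar) + ∫ ω in A, m ω ∂Qstar := by
    rw [hπ]
    rw [← integral_add intg.integrableOn intm.integrableOn]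
    apply setIntegral_congr_fun hA
    intro ω _
    exact (hsum_gm ω).symm
  -- final domination
  have hfin : ∫ ω in A, m ω ∂Qstar ≤ P (Set.indicator A m) := by
    have hmeas : Measurable (Set.indicator A m) := hmm'.indicator hA
    have hbd : ∀ ω, |Set.indicator A m ω| ≤ |C| + |K| := by
      intro ω
      by_cases hω : ω ∈ A
      · rw [Set.indicator_of_mem hω]
        exact le_trans (hmb ω) (by linarith [le_abs_self C])
      · rw [Set.indicator_of_notMem hω]
        simp only [abs_zero]
        positivity
    have := hdom (Set.indicator A m) hmeas ⟨|C| + |K|, hbd⟩ Qstar hQS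
    rwa [integral_indicator hA] at this
  -- assemble
  have hmul : αs A * P nh ≤ αs A * (- ∫ ω, h ω ∂Qstar) :=
    mul_le_mul_of_nonneg_left hPnh ha0
  rw [hPFsplit, hPindsplit, hπA]
  have : αs A * (- ∫ ω, h ω ∂Qstar) = - ∫ ω in A, g ω ∂Qstar := by
    rw [← haE]; ring
  linarith
end

section
/- Let Q* ∈ ∇P(S^X) and define πᵢ = E_{Q*}[Xᵢ] for i = 1,…,N and π₀ = k₀. Then π = (π₀,…,π_N) lies in the core of the cost game c^X(S) = P(Σ_{i∈S} Xᵢ) on {0,1,…,N} (with X₀ = k₀ constant); i.e., Σ_{i∈S} πᵢ ≤ P(Σ_{i∈S} Xᵢ) for all coalitions S and Σ_{i=0}^N πᵢ = P(Σ_{i=0}^N Xᵢ). -/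
open MeasureTheory

/-- With Q* ∈ ∇P(S^X), πᵢ = E_{Q*}[Xᵢ] for i ≥ 1 and π₀ = k₀,
the vector π lies in the core of the cost game c^X(S) = P(Σ_{i∈S} Xᵢ). -/
theorem stmt_14 {Ω : Type*} [MeasurableSpace Ω] (μ : Measure Ω) [IsProbabilityMeasure μ]
    (P : (Ω → ℝ) → ℝ) (S : Set (Measure Ω))
    (hSprob : ∀ Q ∈ S, IsProbabilityMeasure Q)
    (hSac : ∀ Q ∈ S, Q ≪ μ)
    (hdom : ∀ ζ : Ω → ℝ, Measurable ζ → (∃ C : ℝ, ∀ ω, |ζ ω| ≤ C) →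
      ∀ Q ∈ S, ∫ ω, ζ ω ∂Q ≤ P ζ)
    (htrans : ∀ (ξ : Ω → ℝ) (a : ℝ), P (fun ω => ξ ω + a) = P ξ + a)
    (N : ℕ) (X : Fin (N + 1) → Ω → ℝ)
    (hXpos : ∀ i ω, 0 ≤ X i ω) (hXm : ∀ i, Measurable (X i))
    (hXb : ∀ i, ∃ C : ℝ, ∀ ω, X i ω ≤ C)
    (k₀ : ℝ) (hk₀ : 0 ≤ k₀) (hX0 : ∀ ω, X 0 ω = k₀)
    (SX : Ω → ℝ) (hSX : ∀ ω, SX ω = ∑ i ∈ Finset.univ.erase 0, X i ω)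
    (Qstar : Measure Ω) (hQS : Qstar ∈ S) (hQSX : ∫ ω, SX ω ∂Qstar = P SX)
    (π : Fin (N + 1) → ℝ)
    (hπ0 : π 0 = k₀)
    (hπi : ∀ i : Fin (N + 1), i ≠ 0 → π i = ∫ ω, X i ω ∂Qstar) :
    (∀ T : Finset (Fin (N + 1)), ∑ i ∈ T, π i ≤ P (fun ω => ∑ i ∈ T, X i ω)) ∧
      ∑ i, π i = P (fun ω => ∑ i, X i ω) := by
  haveI hprob : IsProbabilityMeasure Qstar := hSprob Qstar hQS
  have hint : ∀ i, Integrable (X i) Qstar := by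
    intro i
    obtain ⟨C, hC⟩ := hXb i
    exact (integrable_const C).mono' (hXm i).aestronglyMeasurable
      (Filter.Eventually.of_forall fun ω => by
        rw [Real.norm_eq_abs, abs_of_nonneg (hXpos i ω)]; exact hC ω)
  have hπ : ∀ i, π i = ∫ ω, X i ω ∂Qstar := by
    intro i
    by_cases h : i = 0
    · subst h
      have : (fun ω => X 0 ω) = fun _ => k₀ := funext hX0
      rw [hπ0]
      simp only [this, integral_const, measure_univ, ENNReal.toReal_one, probReal_univ, smul_eq_mul, one_mul]
    · exact hπi i h
  have hsum : ∀ T : Finset (Fin (N + 1)),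
      ∑ i ∈ T, π i = ∫ ω, ∑ i ∈ T, X i ω ∂Qstar := by
    intro T
    rw [integral_finset_sum T (fun i _ => hint i)]
    exact Finset.sum_congr rfl fun i _ => hπ i
  have hineq : ∀ T : Finset (Fin (N + 1)),
      ∑ i ∈ T, π i ≤ P (fun ω => ∑ i ∈ T, X i ω) := by
    intro T
    rw [hsum T]
    apply hdom _ (Finset.measurable_sum T fun i _ => hXm i) _ Qstar hQS
    choose C hC using hXb
    refine ⟨∑ i ∈ T, C i, fun ω => ?_⟩
    rw [abs_of_nonneg (Finset.sum_nonneg fun i _ => hXpos i ω)]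
    exact Finset.sum_le_sum fun i _ => hC i ω
  refine ⟨hineq, ?_⟩
  have hkey : (fun ω => ∑ i, X i ω) = fun ω => SX ω + k₀ := by
    funext ω
    rw [hSX, ← Finset.sum_erase_add _ _ (Finset.mem_univ 0), hX0]
  rw [hsum Finset.univ, hkey, htrans]
  have hSXint : Integrable SX Qstar := by
    have : SX = fun ω => ∑ i ∈ Finset.univ.erase 0, X i ω := funext hSX
    rw [this]
    exact integrable_finset_sum _ fun i _ => hint i
  calc ∫ ω, SX ω + k₀ ∂Qstar
      = ∫ ω, SX ω ∂Qstar + k₀ := by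
        rw [integral_add hSXint (integrable_const k₀)]
        simp
    _ = P SX + k₀ := by rw [hQSX]
end
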